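/- Let K = F_q and let Y ⊆ P^1 be a set containing [e_1] and [e_2] such that Y ∪ {[0]} is a monoid under componentwise multiplication. Then there exists a positive integer r dividing q-1 such that I(Y) = (t_1^{r+1}t_2 - t_1t_2^{r+1}); moreover r = |Y ∩ T| where T is the projective torus in P^1. -/

import Mathlib

open MvPolynomial

/-- Evaluation of the monomials `y^{v_1},…,y^{v_s}` at a point `x ∈ K^n`. -/
noncomputable def monEval {K : Type} [Field K] {n s : ℕ} (v : Fin s → Fin n → ℕ)
    (x : Fin n → K) : Fin s → K := fun i => ∏ j, x j ^ v i j

/-- The subset of `ℙ^{s-1}` parameterized by the monomials `y^{v_1},…,y^{v_s}`. -/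
noncomputable def paramSet {K : Type} [Field K] {n s : ℕ} (v : Fin s → Fin n → ℕ) :
    Set (Projectivization K (Fin s → K)) :=
  { p | ∃ (x : Fin n → K) (h : monEval v x ≠ 0), p = Projectivization.mk K (monEval v x) h }

/-- The vanishing ideal of a set of projective points: the ideal generated by the
homogeneous polynomials vanishing at all points of the set. -/
noncomputable def vanishIdeal {K : Type} [Field K] {s : ℕ}
    (X : Set (Projectivization K (Fin s → K))) : Ideal (MvPolynomial (Fin s) K) :=
  Ideal.span { f | (∃ d, f.IsHomogeneous d) ∧ ∀ p ∈ X, eval p.rep f = 0 }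

/-- `supp(y^{v_i}) ⊄ supp(y^{v_j})` for all `i ≠ j`. -/
def clutterType {n s : ℕ} (v : Fin s → Fin n → ℕ) : Prop :=
  ∀ i j : Fin s, i ≠ j → ¬ ({k | v i k ≠ 0} ⊆ {k | v j k ≠ 0})

namespace Stmt15Aux

variable {K : Type} [Field K]

/-- Homogenization to degree `e` of a univariate polynomial. -/
noncomputable def hom2 (p : Polynomial K) (e : ℕ) : MvPolynomial (Fin 2) K :=
  ∑ i ∈ Finset.range (e + 1), MvPolynomial.C (p.coeff i) * X 0 ^ (e - i) * X 1 ^ i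

lemma hom2_zero (e : ℕ) : hom2 (0 : Polynomial K) e = 0 := by
  simp [hom2]

lemma hom2_add (p q : Polynomial K) (e : ℕ) :
    hom2 (p + q) e = hom2 p e + hom2 q e := by
  simp [hom2, add_mul, Finset.sum_add_distrib]

lemma hom2_sub (p q : Polynomial K) (e : ℕ) :
    hom2 (p - q) e = hom2 p e - hom2 q e := by
  simp [hom2, sub_mul, Finset.sum_sub_distrib]

lemma hom2_sum {ι : Type*} (s : Finset ι) (f : ι → Polynomial K) (e : ℕ) :
    hom2 (∑ i ∈ s, f i) e = ∑ i ∈ s, hom2 (f i) e := by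
  classical
  induction s using Finset.induction with
  | empty => simp [hom2_zero]
  | insert a s h ih => simp [Finset.sum_insert h, hom2_add, ih]

lemma hom2_CXpow (c : K) {j e : ℕ} (h : j ≤ e) :
    hom2 (Polynomial.C c * Polynomial.X ^ j) e = MvPolynomial.C c * X 0 ^ (e - j) * X 1 ^ j := by
  rw [hom2]
  rw [Finset.sum_eq_single j]
  · simp
  · intro i hi hij
    rw [Polynomial.coeff_C_mul, Polynomial.coeff_X_pow, if_neg hij, mul_zero, map_zero,
      zero_mul, zero_mul]
  · intro h'
    exact absurd (Finset.mem_range.2 (Nat.lt_succ_of_le h)) h'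

lemma hom2_isHomogeneous (p : Polynomial K) (e : ℕ) : (hom2 p e).IsHomogeneous e := by
  apply MvPolynomial.IsHomogeneous.sum
  intro i hi
  have hie : i ≤ e := Nat.lt_succ_iff.mp (Finset.mem_range.mp hi)
  have h1 : (MvPolynomial.C (p.coeff i) * X 0 ^ (e - i) * (X 1 : MvPolynomial (Fin 2) K) ^ i).IsHomogeneous
      (0 + 1 * (e - i) + 1 * i) :=
    ((isHomogeneous_C (Fin 2) (p.coeff i)).mul ((isHomogeneous_X K 0).pow _)).mul
      ((isHomogeneous_X K 1).pow _)
  convert h1 using 1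
  omega

lemma eval_hom2 (p : Polynomial K) (e : ℕ) (x : Fin 2 → K) :
    eval x (hom2 p e) = ∑ i ∈ Finset.range (e + 1), p.coeff i * x 0 ^ (e - i) * x 1 ^ i := by
  simp [hom2]

lemma eval_hom2_one_zero (p : Polynomial K) (e : ℕ) :
    eval ![1, 0] (hom2 p e) = p.coeff 0 := by
  rw [eval_hom2, Finset.sum_eq_single 0] <;> simp +contextual

lemma eval_hom2_zero_one (p : Polynomial K) (e : ℕ) :
    eval ![0, 1] (hom2 p e) = p.coeff e := by
  rw [eval_hom2, Finset.sum_eq_single e]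
  · simp
  · intro i hi hie
    have : 0 < e - i := by
      have := Finset.mem_range.mp hi; omega
    simp [zero_pow (by omega : e - i ≠ 0)]
  · simp

lemma eval_hom2_one_a (p : Polynomial K) {e : ℕ} (hp : p.natDegree ≤ e) (a : K) :
    eval ![1, a] (hom2 p e) = p.eval a := by
  rw [eval_hom2, Polynomial.eval_eq_sum_range' (Nat.lt_succ_of_le hp)]
  simp

variable {K : Type} [Field K]

lemma homog_deg {g : MvPolynomial (Fin 2) K} {d : ℕ} (hg : g.IsHomogeneous d)
    {m : Fin 2 →₀ ℕ} (hm : coeff m g ≠ 0) : m 0 + m 1 = d := by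
  have h := hg hm
  rw [show (Finsupp.weight 1 : (Fin 2 →₀ ℕ) →+ ℕ) = Finsupp.weight (fun _ => 1) from rfl,
    ← Finsupp.degree_eq_weight_one] at h
  rw [← h]; show m 0 + m 1 = ∑ i ∈ m.support, m i
  rw [Finset.sum_subset (Finset.subset_univ m.support)]
  · exact (Fin.sum_univ_two _).symm
  · intro i _ hi
    simpa using hi

lemma eval_smul_homog {g : MvPolynomial (Fin 2) K} {d : ℕ} (hg : g.IsHomogeneous d)
    (c : K) (x : Fin 2 → K) : eval (c • x) g = c ^ d * eval x g := by
  rw [eval_eq', eval_eq', Finset.mul_sum]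
  refine Finset.sum_congr rfl fun m hm => ?_
  have hmd := homog_deg hg (mem_support_iff.mp hm)
  simp only [Pi.smul_apply, smul_eq_mul, mul_pow, Fin.prod_univ_two]
  rw [← hmd, pow_add]
  ring

lemma monomial_eq_prod (m : Fin 2 →₀ ℕ) (c : K) :
    (monomial m c : MvPolynomial (Fin 2) K) = MvPolynomial.C c * X 0 ^ (m 0) * X 1 ^ (m 1) := by
  rw [monomial_eq, Finsupp.prod_fintype _ _ (fun i => pow_zero _), Fin.prod_univ_two, mul_assoc]

lemma exists_hom2 {g : MvPolynomial (Fin 2) K} {d : ℕ} (hg : g.IsHomogeneous d) :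
    ∃ p : Polynomial K, p.natDegree ≤ d ∧ hom2 p d = g := by
  refine ⟨∑ m ∈ g.support, Polynomial.C (coeff m g) * Polynomial.X ^ (m 1), ?_, ?_⟩
  · refine (Polynomial.natDegree_sum_le _ _).trans ?_
    rw [Finset.fold_max_le]
    refine ⟨Nat.zero_le _, fun m hm => ?_⟩
    refine (Polynomial.natDegree_C_mul_le _ _).trans ?_
    rw [Polynomial.natDegree_X_pow]
    have := homog_deg hg (mem_support_iff.mp hm)
    omega
  · rw [hom2_sum]
    conv_rhs => rw [g.as_sum]
    refine Finset.sum_congr rfl fun m hm => ?_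
    have hmd := homog_deg hg (mem_support_iff.mp hm)
    rw [hom2_CXpow _ (by omega : m 1 ≤ d), monomial_eq_prod]
    congr 3
    omega




noncomputable def phi (K : Type) [Field K] :
    MvPolynomial (Fin 2) K →+* FractionRing (MvPolynomial (Fin 2) K) :=
  algebraMap _ _

lemma phi_injective : Function.Injective (phi K) :=
  IsFractionRing.injective _ _

lemma phi_X0_ne_zero : phi K (X 0 : MvPolynomial (Fin 2) K) ≠ 0 := by
  rw [← map_zero (phi K)]
  exact fun h => MvPolynomial.X_ne_zero 0 (phi_injective h)

noncomputable def kappa (K : Type) [Field K] :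
    K →+* FractionRing (MvPolynomial (Fin 2) K) := (phi K).comp MvPolynomial.C

set_option maxHeartbeats 1000000 in
lemma hom2_phi (p : Polynomial K) {e : ℕ} (hp : p.natDegree ≤ e) :
    phi K (hom2 p e) = phi K (X 0) ^ e *
      Polynomial.eval (phi K (X 1) / phi K (X 0)) (p.map (kappa K)) := by
  rw [Polynomial.eval_eq_sum_range'
    (lt_of_le_of_lt (Polynomial.natDegree_map_le) (Nat.lt_succ_of_le hp))]
  rw [hom2, map_sum, Finset.mul_sum]
  refine Finset.sum_congr rfl fun i hi => ?_
  have hie : i ≤ e := Nat.lt_succ_iff.mp (Finset.mem_range.mp hi)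
  rw [map_mul, map_mul, map_pow, map_pow, Polynomial.coeff_map]
  have h2 : (phi K (X 0 : MvPolynomial (Fin 2) K)) ^ (e - i) =
      phi K (X 0) ^ e / phi K (X 0) ^ i := by
    rw [eq_div_iff (pow_ne_zero _ phi_X0_ne_zero), ← pow_add]
    congr 1
    omega
  rw [h2, div_pow]
  show ((phi K).comp MvPolynomial.C) (p.coeff i) * _ * _ = _ * (kappa K (p.coeff i) * _)
  rw [kappa]
  field_simp

lemma hom2_mul (p q : Polynomial K) {e₁ e₂ : ℕ} (hp : p.natDegree ≤ e₁) (hq : q.natDegree ≤ e₂) :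
    hom2 (p * q) (e₁ + e₂) = hom2 p e₁ * hom2 q e₂ := by
  apply phi_injective
  rw [map_mul, hom2_phi p hp, hom2_phi q hq,
    hom2_phi (p * q) (le_trans Polynomial.natDegree_mul_le (add_le_add hp hq)),
    Polynomial.map_mul, Polynomial.eval_mul, pow_add]
  ring


lemma dvd_of_roots (s : Finset K) (p : Polynomial K) (h : ∀ a ∈ s, p.eval a = 0) :
    (∏ a ∈ s, (Polynomial.X - Polynomial.C a)) ∣ p := by
  by_cases hp : p = 0
  · simp [hp]
  · rw [Finset.prod_eq_multiset_prod]
    rw [Multiset.prod_X_sub_C_dvd_iff_le_roots hp]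
    rw [Multiset.le_iff_subset s.nodup]
    intro a ha
    rw [Polynomial.mem_roots hp]
    exact h a ha

lemma prod_eq (s : Finset K) (hr : 0 < s.card) (hs : ∀ a ∈ s, a ^ s.card = 1) :
    ∏ a ∈ s, (Polynomial.X - Polynomial.C a) = Polynomial.X ^ s.card - 1 := by
  set r := s.card with hrdef
  have hdvd : (∏ a ∈ s, (Polynomial.X - Polynomial.C a)) ∣ (Polynomial.X ^ r - 1 : Polynomial K) :=
    dvd_of_roots s _ (fun a ha => by simp [hs a ha])
  have hm1 : (∏ a ∈ s, (Polynomial.X - Polynomial.C a)).Monic :=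
    Polynomial.monic_prod_of_monic _ _ (fun a _ => Polynomial.monic_X_sub_C a)
  have hm2 : (Polynomial.X ^ r - 1 : Polynomial K).Monic := by
    simpa using Polynomial.monic_X_pow_sub_C (1 : K) (by omega : r ≠ 0)
  have hd1 : (∏ a ∈ s, (Polynomial.X - Polynomial.C a)).natDegree = r := by
    rw [Polynomial.natDegree_prod _ _ (fun a _ => Polynomial.X_sub_C_ne_zero a)]
    simp [hrdef]
  have hd2 : (Polynomial.X ^ r - 1 : Polynomial K).natDegree = r := by
    simpa using Polynomial.natDegree_X_pow_sub_C (n := r) (r := (1 : K))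
  exact (Polynomial.eq_of_monic_of_dvd_of_natDegree_le hm1 hm2 hdvd (by omega)).symm

lemma key_dvd (s : Finset K) (hr : 0 < s.card) (hs1 : ∀ a ∈ s, a ^ s.card = 1)
    {g : MvPolynomial (Fin 2) K} {d : ℕ} (hg : g.IsHomogeneous d)
    (h10 : eval ![1, 0] g = 0) (h01 : eval ![0, 1] g = 0)
    (hT : ∀ a ∈ s, eval ![1, a] g = 0) :
    (X 0 ^ (s.card + 1) * X 1 - X 0 * X 1 ^ (s.card + 1)) ∣ g := by
  set r := s.card with hrdef
  obtain ⟨p, hdeg, rfl⟩ := exists_hom2 hg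
  by_cases hp : p = 0
  · subst hp; rw [hom2_zero]; exact dvd_zero _
  have hc0 : p.coeff 0 = 0 := by rw [← eval_hom2_one_zero p d, h10]
  have hcd : p.coeff d = 0 := by rw [← eval_hom2_zero_one p d, h01]
  have hroots : ∀ a ∈ s, p.eval a = 0 := fun a ha => by
    rw [← eval_hom2_one_a p hdeg a]; exact hT a ha
  have hdvd1 : (Polynomial.X ^ r - 1 : Polynomial K) ∣ p := by
    rw [← prod_eq s hr hs1]; exact dvd_of_roots s p hroots
  obtain ⟨q1, hq1⟩ := hdvd1
  have hXq1 : Polynomial.X ∣ q1 := by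
    have hXp : Polynomial.X ∣ p := Polynomial.X_dvd_iff.mpr hc0
    have hnd : ¬ (Polynomial.X ∣ (Polynomial.X ^ r - 1 : Polynomial K)) := by
      rw [Polynomial.X_dvd_iff, Polynomial.coeff_sub, Polynomial.coeff_X_pow,
        Polynomial.coeff_one, if_neg (by omega : ¬ (0 = r)), if_pos rfl]
      norm_num
    rcases Polynomial.prime_X.dvd_mul.mp (hq1 ▸ hXp) with h | h
    · exact absurd h hnd
    · exact h
  obtain ⟨u, hu⟩ := hXq1
  have hfact : p = (Polynomial.X ^ (r + 1) - Polynomial.X) * u := by rw [hq1, hu]; ring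
  have hu0 : u ≠ 0 := by rintro rfl; rw [mul_zero] at hfact; exact hp hfact
  have hXr1 : (Polynomial.X ^ (r + 1) - Polynomial.X : Polynomial K).natDegree = r + 1 := by
    rw [Polynomial.natDegree_sub_eq_left_of_natDegree_lt]
    · exact Polynomial.natDegree_X_pow _
    · rw [Polynomial.natDegree_X, Polynomial.natDegree_X_pow]; omega
  have hXrne : (Polynomial.X ^ (r + 1) - Polynomial.X : Polynomial K) ≠ 0 := by
    intro h; rw [h] at hXr1; simp at hXr1
  have hlt : p.natDegree < d := by
    rcases lt_or_eq_of_le hdeg with h | h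
    · exact h
    · exfalso; apply hp
      rw [← Polynomial.leadingCoeff_eq_zero, Polynomial.leadingCoeff, h, hcd]
  have hmulnd : p.natDegree = (r + 1) + u.natDegree := by
    rw [hfact, Polynomial.natDegree_mul hXrne hu0, hXr1]
  have hud : u.natDegree ≤ d - (r + 2) := by omega
  have hd2 : d = (r + 2) + (d - (r + 2)) := by omega
  have hsplit : hom2 p d
      = hom2 (Polynomial.X ^ (r + 1) - Polynomial.X) (r + 2) * hom2 u (d - (r + 2)) := by
    rw [hfact]
    conv_lhs => rw [hd2]
    exact hom2_mul _ _ (by rw [hXr1]; omega) hud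
  rw [hsplit]
  have hX : hom2 (Polynomial.X ^ (r + 1) - Polynomial.X : Polynomial K) (r + 2)
      = -(X 0 ^ (r + 1) * X 1 - X 0 * X 1 ^ (r + 1)) := by
    have e1 : (Polynomial.X ^ (r + 1) - Polynomial.X : Polynomial K)
        = Polynomial.C 1 * Polynomial.X ^ (r + 1) - Polynomial.C 1 * Polynomial.X ^ 1 := by simp
    rw [e1, hom2_sub, hom2_CXpow _ (by omega), hom2_CXpow _ (by omega),
      show r + 2 - (r + 1) = 1 from by omega, show r + 2 - 1 = r + 1 from by omega]
    simp only [map_one, one_mul, pow_one]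
    ring
  rw [hX]
  exact ⟨-(hom2 u (d - (r + 2))), by ring⟩


lemma vec_ne (a : K) : (![1, a] : Fin 2 → K) ≠ 0 := fun h => by simpa using congrFun h 0

lemma vec10_ne : (![1, 0] : Fin 2 → K) ≠ 0 := vec_ne 0

lemma vec01_ne : (![0, 1] : Fin 2 → K) ≠ 0 := fun h => by simpa using congrFun h 1

lemma classify (p : Projectivization K (Fin 2 → K)) :
    p = Projectivization.mk K ![1, 0] vec10_ne ∨ p = Projectivization.mk K ![0, 1] vec01_ne ∨
      ∃ a : K, a ≠ 0 ∧ p = Projectivization.mk K ![1, a] (vec_ne a) := by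
  by_cases h0 : p.rep 0 = 0
  · right; left
    rw [← p.mk_rep]
    have h1 : p.rep 1 ≠ 0 := by
      intro h1
      apply p.rep_nonzero
      funext i; fin_cases i
      · exact h0
      · exact h1
    rw [Projectivization.mk_eq_mk_iff']
    refine ⟨p.rep 1, ?_⟩
    funext i
    fin_cases i
    · simpa using h0.symm
    · simp
  · by_cases h1 : p.rep 1 = 0
    · left
      rw [← p.mk_rep, Projectivization.mk_eq_mk_iff']
      refine ⟨p.rep 0, ?_⟩
      funext i
      fin_cases i
      · simp
      · simpa using h1.symm
    · right; right
      refine ⟨p.rep 1 / p.rep 0, div_ne_zero h1 h0, ?_⟩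
      rw [← p.mk_rep, Projectivization.mk_eq_mk_iff']
      refine ⟨p.rep 0, ?_⟩
      funext i
      fin_cases i
      · simp
      · simp only [Pi.smul_apply, Matrix.cons_val_one, Matrix.head_cons, smul_eq_mul]
        simp only [Projectivization.mk_rep]
        show p.rep 0 * (p.rep 1 / p.rep 0) = p.rep 1
        field_simp

lemma eval_rep (g : MvPolynomial (Fin 2) K) {d : ℕ} (hg : g.IsHomogeneous d)
    (v : Fin 2 → K) (hv : v ≠ 0) :
    ∃ c : K, c ≠ 0 ∧ eval (Projectivization.mk K v hv).rep g = c ^ d * eval v g := by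
  obtain ⟨u, hu⟩ := Projectivization.exists_smul_eq_mk_rep K v hv
  refine ⟨u, u.ne_zero, ?_⟩
  rw [← hu, Units.smul_def, eval_smul_homog hg]

end Stmt15Aux

/-- If `[e_1], [e_2] ∈ Y ⊆ ℙ¹` and `Y ∪ {[0]}` is a monoid under componentwise
multiplication (it contains the identity `[(1,1)]` and is closed under componentwise
products, a zero product giving the adjoined element `[0]`), then there is a positive
integer `r` dividing `q-1` with `I(Y) = (t_1^{r+1}t_2 - t_1t_2^{r+1})`; moreover
`r = |Y ∩ T|` where `T` is the projective torus in `ℙ¹`. -/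
theorem stmt15 {K : Type} [Field K] [Fintype K] (Y : Set (Projectivization K (Fin 2 → K)))
    (he1 : Projectivization.mk K ![1, 0] (fun h => by simpa using congrFun h 0) ∈ Y)
    (he2 : Projectivization.mk K ![0, 1] (fun h => by simpa using congrFun h 1) ∈ Y)
    (hone : Projectivization.mk K ![1, 1] (fun h => by simpa using congrFun h 0) ∈ Y)
    (hmul : ∀ p ∈ Y, ∀ p' ∈ Y, ∀ h : (fun i => p.rep i * p'.rep i) ≠ 0,
      Projectivization.mk K (fun i => p.rep i * p'.rep i) h ∈ Y) :
    ∃ r : ℕ, 0 < r ∧ r ∣ Fintype.card K - 1 ∧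
      vanishIdeal Y = Ideal.span {X 0 ^ (r + 1) * X 1 - X 0 * X 1 ^ (r + 1)} ∧
      r = (Y ∩ {p | ∀ i, p.rep i ≠ 0}).ncard := by
  classical
  have he1' : Projectivization.mk K ![1, 0] Stmt15Aux.vec10_ne ∈ Y := he1
  have he2' : Projectivization.mk K ![0, 1] Stmt15Aux.vec01_ne ∈ Y := he2
  have hone' : Projectivization.mk K ![1, 1] (Stmt15Aux.vec_ne 1) ∈ Y := hone
  -- closure under multiplication on the torus
  have hmk : ∀ a b : Kˣ, Projectivization.mk K ![1, (a : K)] (Stmt15Aux.vec_ne _) ∈ Y →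
      Projectivization.mk K ![1, (b : K)] (Stmt15Aux.vec_ne _) ∈ Y →
      Projectivization.mk K ![1, ((a * b : Kˣ) : K)] (Stmt15Aux.vec_ne _) ∈ Y := by
    intro a b ha hb
    set p := Projectivization.mk K ![1, (a : K)] (Stmt15Aux.vec_ne _) with hp
    set p' := Projectivization.mk K ![1, (b : K)] (Stmt15Aux.vec_ne _) with hp'
    obtain ⟨u, hu⟩ := Projectivization.exists_smul_eq_mk_rep K ![1, (a : K)] (Stmt15Aux.vec_ne _)
    obtain ⟨w, hw⟩ := Projectivization.exists_smul_eq_mk_rep K ![1, (b : K)] (Stmt15Aux.vec_ne _)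
    have hfun : (fun i => p.rep i * p'.rep i) = ((u * w : Kˣ) : K) • ![1, ((a * b : Kˣ) : K)] := by
      funext i
      rw [hp, hp', ← hu, ← hw]
      fin_cases i <;> simp [Units.smul_def] <;> ring
    have hne : (fun i => p.rep i * p'.rep i) ≠ 0 := by
      rw [hfun]
      exact smul_ne_zero (Units.ne_zero _) (Stmt15Aux.vec_ne _)
    have hmem := hmul p ha p' hb hne
    have heq : Projectivization.mk K (fun i => p.rep i * p'.rep i) hne
        = Projectivization.mk K ![1, ((a * b : Kˣ) : K)] (Stmt15Aux.vec_ne _) := by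
      rw [Projectivization.mk_eq_mk_iff']
      exact ⟨((u * w : Kˣ) : K), hfun.symm⟩
    rwa [heq] at hmem
  let M : Submonoid Kˣ :=
    { carrier := {a : Kˣ | Projectivization.mk K ![1, (a : K)] (Stmt15Aux.vec_ne _) ∈ Y}
      one_mem' := hone'
      mul_mem' := fun ha hb => hmk _ _ ha hb }
  let H : Subgroup Kˣ :=
    { M with
      inv_mem' := by
        intro a ha
        have hn : a ^ (Fintype.card Kˣ - 1) ∈ M := M.pow_mem ha _
        have h1 : a ^ (Fintype.card Kˣ - 1) * a = 1 := by
          rw [← pow_succ, Nat.sub_add_cancel Fintype.card_pos]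
          exact pow_card_eq_one
        exact (eq_inv_of_mul_eq_one_left h1) ▸ hn }
  have hHmem : ∀ a : Kˣ, a ∈ H ↔ Projectivization.mk K ![1, (a : K)] (Stmt15Aux.vec_ne _) ∈ Y :=
    fun a => Iff.rfl
  set r := Nat.card H with hrdef
  have hr_pos : 0 < r := Nat.card_pos
  have hpow : ∀ a : Kˣ, a ∈ H → a ^ r = 1 := by
    intro a ha
    have h1 : (⟨a, ha⟩ : H) ^ r = 1 := by rw [hrdef]; exact pow_card_eq_one'
    have := congrArg (Subtype.val) h1
    simpa using this
  set s : Finset K := (Set.toFinset (H : Set Kˣ)).image (fun u : Kˣ => (u : K)) with hsdef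
  have hcard : s.card = r := by
    rw [hsdef, Finset.card_image_of_injective _ (fun x y h => Units.ext h), Set.toFinset_card,
      hrdef, Nat.card_eq_fintype_card]
    rfl
  have hmem_s : ∀ x : K, x ∈ s ↔ ∃ u : Kˣ, u ∈ H ∧ (u : K) = x := by
    intro x
    simp [hsdef, Set.mem_toFinset]
  have hs1 : ∀ a ∈ s, a ^ s.card = 1 := by
    intro a ha
    obtain ⟨u, huH, rfl⟩ := (hmem_s a).mp ha
    rw [hcard]
    have := hpow u huH
    rw [← Units.val_pow_eq_pow_val, this, Units.val_one]
  -- the binomial is homogeneous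
  have hfh : (X 0 ^ (r + 1) * X 1 - X 0 * X 1 ^ (r + 1) : MvPolynomial (Fin 2) K).IsHomogeneous
      (r + 2) := by
    rw [← mem_homogeneousSubmodule]
    apply Submodule.sub_mem <;> rw [mem_homogeneousSubmodule]
    · exact (by omega : 1 * (r + 1) + 1 = r + 2) ▸
        ((isHomogeneous_X K 0).pow _).mul (isHomogeneous_X K 1)
    · exact (by omega : 1 + 1 * (r + 1) = r + 2) ▸
        (isHomogeneous_X K 0).mul ((isHomogeneous_X K 1).pow _)
  -- the binomial vanishes on Y
  have hfY : ∀ p ∈ Y,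
      eval p.rep (X 0 ^ (r + 1) * X 1 - X 0 * X 1 ^ (r + 1) : MvPolynomial (Fin 2) K) = 0 := by
    intro p hp
    rcases Stmt15Aux.classify p with h | h | ⟨a, ha, h⟩
    · obtain ⟨c, hc, hce⟩ := Stmt15Aux.eval_rep _ hfh ![1, 0] Stmt15Aux.vec10_ne
      rw [h, hce]
      simp
    · obtain ⟨c, hc, hce⟩ := Stmt15Aux.eval_rep _ hfh ![0, 1] Stmt15Aux.vec01_ne
      rw [h, hce]
      simp
    · obtain ⟨c, hc, hce⟩ := Stmt15Aux.eval_rep _ hfh ![1, a] (Stmt15Aux.vec_ne a)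
      rw [h, hce]
      have haH : Units.mk0 a ha ∈ H := by
        rw [hHmem]
        show Projectivization.mk K ![1, a] _ ∈ Y
        rw [← h]
        exact hp
      have har : a ^ r = 1 := by
        have := hpow _ haH
        have := congrArg (Units.val) this
        simpa using this
      have : eval ![1, a] (X 0 ^ (r + 1) * X 1 - X 0 * X 1 ^ (r + 1) : MvPolynomial (Fin 2) K)
          = 0 := by
        simp only [map_sub, map_mul, map_pow, eval_X, Matrix.cons_val_zero, Matrix.cons_val_one,
          Matrix.head_cons, one_pow, one_mul, mul_one]
        rw [pow_succ, har, one_mul, sub_self]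
      rw [this, mul_zero]
  refine ⟨r, hr_pos, ?_, ?_, ?_⟩
  · rw [hrdef]
    simpa [Nat.card_eq_fintype_card, Fintype.card_units] using H.card_subgroup_dvd_card
  · apply le_antisymm
    · rw [vanishIdeal, Ideal.span_le]
      rintro g ⟨⟨d, hgd⟩, hgv⟩
      rw [SetLike.mem_coe, Ideal.mem_span_singleton]
      have hval : ∀ (v : Fin 2 → K) (hv : v ≠ 0),
          Projectivization.mk K v hv ∈ Y → eval v g = 0 := by
        intro v hv hmem
        obtain ⟨c, hc, hce⟩ := Stmt15Aux.eval_rep g hgd v hv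
        have h0 := hgv _ hmem
        rw [hce] at h0
        rcases mul_eq_zero.mp h0 with h | h
        · exact absurd h (pow_ne_zero _ hc)
        · exact h
      have h10 : eval ![1, 0] g = 0 := hval _ Stmt15Aux.vec10_ne he1'
      have h01 : eval ![0, 1] g = 0 := hval _ Stmt15Aux.vec01_ne he2'
      have hT : ∀ a ∈ s, eval ![1, a] g = 0 := by
        intro a ha
        obtain ⟨u, huH, rfl⟩ := (hmem_s a).mp ha
        exact hval _ (Stmt15Aux.vec_ne _) ((hHmem u).mp huH)
      have := Stmt15Aux.key_dvd s (by rw [hcard]; exact hr_pos) hs1 hgd h10 h01 hT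
      rwa [hcard] at this
    · rw [Ideal.span_le, Set.singleton_subset_iff, vanishIdeal, SetLike.mem_coe]
      exact Ideal.subset_span ⟨⟨r + 2, hfh⟩, hfY⟩
  · have himg : Y ∩ {p | ∀ i, p.rep i ≠ 0}
        = (fun u : Kˣ => Projectivization.mk K ![1, (u : K)] (Stmt15Aux.vec_ne _)) ''
          (H : Set Kˣ) := by
      ext p
      constructor
      · rintro ⟨hpY, hpT⟩
        rcases Stmt15Aux.classify p with h | h | ⟨a, ha, h⟩
        · exfalso
          obtain ⟨u, hu⟩ := Projectivization.exists_smul_eq_mk_rep K (![1, 0] : Fin 2 → K) Stmt15Aux.vec10_ne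
          apply hpT 1
          rw [h, ← hu]
          simp [Units.smul_def]
        · exfalso
          obtain ⟨u, hu⟩ := Projectivization.exists_smul_eq_mk_rep K (![0, 1] : Fin 2 → K) Stmt15Aux.vec01_ne
          apply hpT 0
          rw [h, ← hu]
          simp [Units.smul_def]
        · refine ⟨Units.mk0 a ha, ?_, h.symm⟩
          show Projectivization.mk K ![1, a] _ ∈ Y
          rw [← h]
          exact hpY
      · rintro ⟨u, huH, rfl⟩
        refine ⟨(hHmem u).mp huH, ?_⟩
        intro i
        obtain ⟨c, hc⟩ :=
          Projectivization.exists_smul_eq_mk_rep K ![1, (u : K)] (Stmt15Aux.vec_ne _)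
        rw [← hc]
        fin_cases i <;> simp [Units.smul_def]
    have hinj : Function.Injective
        (fun u : Kˣ => Projectivization.mk K ![1, (u : K)] (Stmt15Aux.vec_ne _)) := by
      intro a b hab
      simp only at hab
      rw [Projectivization.mk_eq_mk_iff] at hab
      obtain ⟨c, hc⟩ := hab
      have h0 := congrFun hc 0
      have h1 := congrFun hc 1
      simp [Units.smul_def] at h0 h1
      ext
      rw [← h1, h0, Units.val_one, one_mul]
    rw [himg, Set.ncard_image_of_injective _ hinj, ← Nat.card_coe_set_eq, hrdef]
    rfl
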